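/- arXiv:1906.07231 — 4 statements merged into one kernel-verified Lean document; each statement's English description precedes it below -/
import Mathlib

section
/- Every function ψ : Q → ℝ satisfying ψ(x) − ψ(y) ≤ n·max(|x₁ − y₁|, |x₂ − y₂|) for all x, y ∈ Q and ψ(x) = ψ_∂Q(x) for all x ∈ ∂Q satisfies ψ⁻(x) ≤ ψ(x) ≤ ψ⁺(x) for all x ∈ Q. Moreover, ψ⁻ and ψ⁺ themselves satisfy these two conditions; thus ψ⁻ (resp. ψ⁺) is the minimal (resp. maximal) such function. -/
/-- The rescaled Aztec diamond `Q = {x : |x₁| + |x₂| ≤ 1/(2n)}`. -/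
def Qset (n : ℕ) : Set (ℝ × ℝ) := {x | |x.1| + |x.2| ≤ 1 / (2 * n)}

/-- The boundary `∂Q = {x : |x₁| + |x₂| = 1/(2n)}`. -/
def bdQ (n : ℕ) : Set (ℝ × ℝ) := {x | |x.1| + |x.2| = 1 / (2 * n)}

/-- The boundary datum `ψ_∂Q(x) = (n/2)(|x₁| − |x₂|)`. -/
noncomputable def psiBd (n : ℕ) (x : ℝ × ℝ) : ℝ := ((n : ℝ) / 2) * (|x.1| - |x.2|)

/-- The minimal function `ψ⁻(x) = n|x₁| − 1/4`. -/
noncomputable def psiMinus (n : ℕ) (x : ℝ × ℝ) : ℝ := (n : ℝ) * |x.1| - 1 / 4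

/-- The maximal function `ψ⁺(x) = 1/4 − n|x₂|`. -/
noncomputable def psiPlus (n : ℕ) (x : ℝ × ℝ) : ℝ := 1 / 4 - (n : ℝ) * |x.2|

/-- A function `ψ : Q → ℝ` which is Lipschitz with gradient constrained to the Newton polygon
`N = {ρ : |ρ₁| + |ρ₂| ≤ n}` (expressed by `ψ(x) − ψ(y) ≤ n·max(|x₁−y₁|,|x₂−y₂|)`) and which
agrees with `ψ_∂Q` on `∂Q`. -/
def Admissible (n : ℕ) (ψ : ℝ × ℝ → ℝ) : Prop :=
  (∀ x ∈ Qset n, ∀ y ∈ Qset n, ψ x - ψ y ≤ (n : ℝ) * max |x.1 - y.1| |x.2 - y.2|) ∧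
  ∀ x ∈ bdQ n, ψ x = psiBd n x

/-- Choose the boundary-touching coordinate with the same sign as `a`. -/
lemma sign_pt (a b : ℝ) (hb : |a| ≤ b) :
    ∃ t : ℝ, |t| = b ∧ |a - t| = b - |a| := by
  have hb0 : 0 ≤ b := (abs_nonneg a).trans hb
  rcases le_or_gt 0 a with h | h
  · rw [abs_of_nonneg h] at hb
    exact ⟨b, abs_of_nonneg hb0, by
      rw [abs_of_nonpos (by linarith), abs_of_nonneg h]; ring⟩
  · rw [abs_of_neg h] at hb
    refine ⟨-b, by rw [abs_neg, abs_of_nonneg hb0], ?_⟩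
    rw [abs_of_neg h]
    rw [show a - -b = a + b by ring, abs_of_nonneg (by linarith)]
    ring

/-- every admissible `ψ` satisfies `ψ⁻ ≤ ψ ≤ ψ⁺` on `Q`; moreover `ψ⁻` and `ψ⁺`
are themselves admissible, so they are the minimal and maximal admissible functions. -/
theorem stmt_2 (n : ℕ) (hn : 1 ≤ n) :
    (∀ ψ : ℝ × ℝ → ℝ, Admissible n ψ →
      ∀ x ∈ Qset n, psiMinus n x ≤ ψ x ∧ ψ x ≤ psiPlus n x) ∧
    Admissible n (psiMinus n) ∧ Admissible n (psiPlus n) := by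
  have hn0 : (0:ℝ) < n := by exact_mod_cast hn
  have hhalf : (n:ℝ) * (1 / (2 * n)) = 1 / 2 := by field_simp
  constructor
  · intro ψ ⟨hLip, hBd⟩ x hx
    have hQ : |x.1| + |x.2| ≤ 1 / (2 * n) := hx
    constructor
    · -- lower bound: move in first coordinate to the boundary
      obtain ⟨t, ht1, ht2⟩ := sign_pt x.1 (1 / (2 * n) - |x.2|)
        (by have := abs_nonneg x.2; linarith)
      set y : ℝ × ℝ := (t, x.2) with hy
      have hyB : y ∈ bdQ n := by
        show |t| + |x.2| = 1 / (2 * n); rw [ht1]; ring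
      have hyQ : y ∈ Qset n := le_of_eq hyB
      have hpsiy : ψ y = ((n:ℝ) / 2) * (|t| - |x.2|) := hBd y hyB
      have hL := hLip y hyQ x hx
      have h2 : |y.2 - x.2| = 0 := by simp [hy]
      have h1 : |y.1 - x.1| = 1 / (2 * n) - |x.2| - |x.1| := by
        rw [show y.1 - x.1 = -(x.1 - t) from by simp [hy], abs_neg, ht2]
      rw [h1, h2] at hL
      have hmax : max (1 / (2 * n) - |x.2| - |x.1|) 0 = 1 / (2 * n) - |x.2| - |x.1| := by
        apply max_eq_left; linarith
      rw [hmax] at hL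
      have : ψ y = (n:ℝ) * |x.1| - 1/4 + ((n:ℝ) * (1 / (2*n) - |x.2| - |x.1|)) := by
        rw [hpsiy, ht1]; nlinarith [hhalf]
      show (n:ℝ) * |x.1| - 1/4 ≤ ψ x
      nlinarith [hL, this, mul_le_mul_of_nonneg_left (le_refl (1 / (2*n) - |x.2| - |x.1|)) hn0.le]
    · -- upper bound: move in second coordinate to the boundary
      obtain ⟨t, ht1, ht2⟩ := sign_pt x.2 (1 / (2 * n) - |x.1|)
        (by have := abs_nonneg x.1; linarith)
      set y : ℝ × ℝ := (x.1, t) with hy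
      have hyB : y ∈ bdQ n := by
        show |x.1| + |t| = 1 / (2 * n); rw [ht1]; ring
      have hyQ : y ∈ Qset n := le_of_eq hyB
      have hpsiy : ψ y = ((n:ℝ) / 2) * (|x.1| - |t|) := hBd y hyB
      have hL := hLip x hx y hyQ
      have h1 : |x.1 - y.1| = 0 := by simp [hy]
      have h2 : |x.2 - y.2| = 1 / (2 * n) - |x.1| - |x.2| := by
        rw [show x.2 - y.2 = x.2 - t from by simp [hy], ht2]
      rw [h1, h2] at hL
      have hmax : max (0:ℝ) (1 / (2 * n) - |x.1| - |x.2|) = 1 / (2 * n) - |x.1| - |x.2| := by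
        apply max_eq_right; linarith
      rw [hmax] at hL
      have : ψ y = 1/4 - (n:ℝ) * |x.2| - ((n:ℝ) * (1 / (2*n) - |x.1| - |x.2|)) := by
        rw [hpsiy, ht1]; nlinarith [hhalf]
      show ψ x ≤ 1/4 - (n:ℝ) * |x.2|
      nlinarith [hL, this]
  · constructor
    · constructor
      · intro x _ y _
        show (n:ℝ) * |x.1| - 1/4 - ((n:ℝ) * |y.1| - 1/4) ≤ _
        have h1 : |x.1| - |y.1| ≤ |x.1 - y.1| := abs_sub_abs_le_abs_sub _ _
        have h2 : |x.1 - y.1| ≤ max |x.1 - y.1| |x.2 - y.2| := le_max_left _ _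
        nlinarith
      · intro x hx
        have h : |x.1| + |x.2| = 1 / (2 * n) := hx
        show (n:ℝ) * |x.1| - 1/4 = ((n:ℝ) / 2) * (|x.1| - |x.2|)
        have : (n:ℝ) * (|x.1| + |x.2|) = 1 / 2 := by rw [h]; exact hhalf
        linarith
    · constructor
      · intro x _ y _
        show 1/4 - (n:ℝ) * |x.2| - (1/4 - (n:ℝ) * |y.2|) ≤ _
        have h1 : |y.2| - |x.2| ≤ |y.2 - x.2| := abs_sub_abs_le_abs_sub _ _
        have h1' : |y.2 - x.2| = |x.2 - y.2| := abs_sub_comm _ _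
        have h2 : |x.2 - y.2| ≤ max |x.1 - y.1| |x.2 - y.2| := le_max_right _ _
        nlinarith
      · intro x hx
        have h : |x.1| + |x.2| = 1 / (2 * n) := hx
        show 1/4 - (n:ℝ) * |x.2| = ((n:ℝ) / 2) * (|x.1| - |x.2|)
        have : (n:ℝ) * (|x.1| + |x.2|) = 1 / 2 := by rw [h]; exact hhalf
        linarith
end

section
/- Let σ : ℝ² → ℝ be continuous and strictly convex. Then there exists a Lipschitz function ψ : Q → ℝ with ψ = ψ_∂Q on ∂Q and ∇ψ(x) ∈ N for almost every x ∈ Q such that ∫_Q σ(∇ψ(x)) dx < ∫_Q σ(∇ψ⁺(x)) dx = (|Q|/2)(σ(0,n) + σ(0,−n)), where |Q| denotes the area of Q. In particular, ψ⁺ does not minimize the functional ψ ↦ ∫_Q σ(∇ψ(x)) dx over the class of Lipschitz functions with boundary value ψ_∂Q and almost-everywhere gradient in N; the analogous statement holds with ψ⁺ replaced by ψ⁻ and σ(0,n) + σ(0,−n) replaced by σ(n,0) + σ(−n,0). -/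
open MeasureTheory

/-- The Newton polygon `N = {ρ : |ρ₁| + |ρ₂| ≤ n}`. -/
def NP (n : ℕ) : Set (ℝ × ℝ) := {ρ | |ρ.1| + |ρ.2| ≤ (n : ℝ)}

/-- The gradient `∇ψ(x) = (∂₁ψ(x), ∂₂ψ(x))` (junk value `0` where `ψ` is not
differentiable; a Lipschitz function is differentiable a.e.). -/
noncomputable def grad (ψ : ℝ × ℝ → ℝ) (x : ℝ × ℝ) : ℝ × ℝ :=
  (fderiv ℝ ψ x (1, 0), fderiv ℝ ψ x (0, 1))

section Aux

open Filter Topology Set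

lemma mp_swap : MeasurePreserving (Prod.swap : ℝ×ℝ → ℝ×ℝ) volume volume := by
  rw [Measure.volume_eq_prod]; exact Measure.measurePreserving_swap

lemma mp_flip2 : MeasurePreserving (fun x : ℝ×ℝ => (x.1, -x.2)) volume volume := by
  rw [Measure.volume_eq_prod]
  exact (MeasurePreserving.id volume).prod (Measure.measurePreserving_neg volume)

lemma mp_flip1 : MeasurePreserving (fun x : ℝ×ℝ => (-x.1, x.2)) volume volume := by
  rw [Measure.volume_eq_prod]
  exact (Measure.measurePreserving_neg volume).prod (MeasurePreserving.id volume)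

lemma null_snd : volume {x : ℝ×ℝ | x.2 = 0} = 0 := by
  have h : {x : ℝ×ℝ | x.2 = 0} = (univ : Set ℝ) ×ˢ ({0} : Set ℝ) := by
    ext x; exact ⟨fun hx => ⟨trivial, hx⟩, fun hx => hx.2⟩
  rw [Measure.volume_eq_prod, h, Measure.prod_prod, Real.volume_singleton, mul_zero]

lemma null_fst : volume {x : ℝ×ℝ | x.1 = 0} = 0 := by
  have h : {x : ℝ×ℝ | x.1 = 0} = ({0} : Set ℝ) ×ˢ (univ : Set ℝ) := by
    ext x; exact ⟨fun hx => ⟨hx, trivial⟩, fun hx => hx.1⟩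
  rw [Measure.volume_eq_prod, h, Measure.prod_prod, Real.volume_singleton, zero_mul]

lemma half_split (W : Set (ℝ×ℝ)) (hW : MeasurableSet W) (hfin : volume W ≠ ⊤)
    (p : ℝ×ℝ → ℝ) (hp : Continuous p) (hnull : volume {x : ℝ×ℝ | p x = 0} = 0)
    (T : ℝ×ℝ → ℝ×ℝ) (hT : MeasurePreserving T volume volume)
    (hTW : T ⁻¹' W = W) (hTp : ∀ x, p (T x) = - p x) :
    (volume (W ∩ {x | 0 < p x})).toReal = (volume W).toReal / 2 ∧
    (volume (W ∩ {x | ¬ 0 < p x})).toReal = (volume W).toReal / 2 := by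
  have hpos : MeasurableSet {x : ℝ×ℝ | 0 < p x} := measurableSet_lt measurable_const hp.measurable
  set A := W ∩ {x | 0 < p x} with hA
  have hpre : T ⁻¹' A = W ∩ {x | p x < 0} := by
    ext x
    simp only [hA, Set.mem_preimage, Set.mem_inter_iff, Set.mem_setOf_eq, hTp x]
    rw [show (T x ∈ W) ↔ (x ∈ W) from by rw [← Set.mem_preimage, hTW]]
    constructor
    · rintro ⟨h1, h2⟩; exact ⟨h1, by linarith⟩
    · rintro ⟨h1, h2⟩; exact ⟨h1, by linarith⟩
  have hBA : volume (W ∩ {x | p x < 0}) = volume A := by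
    rw [← hpre]; exact hT.measure_preimage (hW.inter hpos).nullMeasurableSet
  have hA' : W ∩ {x | ¬ 0 < p x} = (W ∩ {x | p x < 0}) ∪ (W ∩ {x | p x = 0}) := by
    ext x
    simp only [Set.mem_inter_iff, Set.mem_setOf_eq, Set.mem_union, not_lt]
    constructor
    · rintro ⟨h1, h2⟩
      rcases lt_or_eq_of_le h2 with h | h
      · exact Or.inl ⟨h1, h⟩
      · exact Or.inr ⟨h1, by linarith⟩
    · rintro (⟨h1, h2⟩ | ⟨h1, h2⟩)
      · exact ⟨h1, le_of_lt h2⟩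
      · exact ⟨h1, by linarith⟩
  have hvA' : volume (W ∩ {x | ¬ 0 < p x}) = volume A := by
    rw [hA']
    refine le_antisymm ?_ (hBA ▸ measure_mono Set.subset_union_left)
    calc volume ((W ∩ {x | p x < 0}) ∪ (W ∩ {x | p x = 0}))
        ≤ volume (W ∩ {x | p x < 0}) + volume (W ∩ {x | p x = 0}) := measure_union_le _ _
      _ = volume A := by
          rw [measure_mono_null Set.inter_subset_right hnull, add_zero, hBA]
  have hdiff : W ∩ {x | ¬ 0 < p x} = W \ {x | 0 < p x} := by
    ext x; simp [Set.mem_diff]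
  have hsum : volume A + volume (W ∩ {x | ¬ 0 < p x}) = volume W := by
    rw [hdiff]; exact measure_inter_add_diff W hpos
  have hAfin : volume A ≠ ⊤ :=
    ne_top_of_le_ne_top hfin (measure_mono Set.inter_subset_left)
  have htr : (volume W).toReal = (volume A).toReal + (volume A).toReal := by
    rw [← hsum, hvA', ENNReal.toReal_add hAfin hAfin]
  constructor
  · linarith
  · rw [hvA']; linarith

lemma integrableOn_if (W : Set (ℝ×ℝ)) (hfin : volume W ≠ ⊤)
    (p : ℝ×ℝ → ℝ) (hp : Continuous p) (c1 c2 : ℝ) :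
    IntegrableOn (fun x => if 0 < p x then c1 else c2) W volume := by
  have hpos : MeasurableSet {x : ℝ×ℝ | 0 < p x} := measurableSet_lt measurable_const hp.measurable
  haveI : IsFiniteMeasure (volume.restrict W) :=
    ⟨by rwa [Measure.restrict_apply_univ, lt_top_iff_ne_top]⟩
  have h : (fun x : ℝ×ℝ => if 0 < p x then c1 else c2)
      = fun x => Set.indicator {x : ℝ×ℝ | 0 < p x} (fun _ => c1 - c2) x + c2 := by
    funext x
    by_cases hx : 0 < p x
    · simp [Set.indicator_of_mem, hx]
    · simp [Set.indicator_of_notMem, hx]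
  rw [IntegrableOn, h]
  exact ((integrable_const (c1 - c2)).indicator hpos).add (integrable_const c2)

lemma integral_if (W : Set (ℝ×ℝ)) (hW : MeasurableSet W) (hfin : volume W ≠ ⊤)
    (p : ℝ×ℝ → ℝ) (hp : Continuous p) (hnull : volume {x : ℝ×ℝ | p x = 0} = 0)
    (T : ℝ×ℝ → ℝ×ℝ) (hT : MeasurePreserving T volume volume)
    (hTW : T ⁻¹' W = W) (hTp : ∀ x, p (T x) = - p x) (c1 c2 : ℝ) :
    ∫ x in W, (if 0 < p x then c1 else c2) = (volume W).toReal / 2 * (c1 + c2) := by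
  have hpos : MeasurableSet {x : ℝ×ℝ | 0 < p x} := measurableSet_lt measurable_const hp.measurable
  have hposc : MeasurableSet {x : ℝ×ℝ | ¬ 0 < p x} := hpos.compl
  obtain ⟨h1, h2⟩ := half_split W hW hfin p hp hnull T hT hTW hTp
  have hu : W = (W ∩ {x | 0 < p x}) ∪ (W ∩ {x | ¬ 0 < p x}) := by
    ext x; simp only [Set.mem_union, Set.mem_inter_iff, Set.mem_setOf_eq]; tauto
  have hint := integrableOn_if W hfin p hp c1 c2
  have e1 : ∫ x in W ∩ {x | 0 < p x}, (if 0 < p x then c1 else c2)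
      = (volume W).toReal / 2 * c1 := by
    have e : ∫ x in W ∩ {x | 0 < p x}, (if 0 < p x then c1 else c2)
        = ∫ _x in W ∩ {x | 0 < p x}, c1 :=
      setIntegral_congr_fun (hW.inter hpos) (fun x hx => if_pos hx.2)
    rw [e, setIntegral_const, measureReal_def, h1, smul_eq_mul]
  have e2 : ∫ x in W ∩ {x | ¬ 0 < p x}, (if 0 < p x then c1 else c2)
      = (volume W).toReal / 2 * c2 := by
    have e : ∫ x in W ∩ {x | ¬ 0 < p x}, (if 0 < p x then c1 else c2)
        = ∫ _x in W ∩ {x | ¬ 0 < p x}, c2 :=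
      setIntegral_congr_fun (hW.inter hposc) (fun x hx => if_neg hx.2)
    rw [e, setIntegral_const, measureReal_def, h2, smul_eq_mul]
  calc ∫ x in W, (if 0 < p x then c1 else c2)
      = ∫ x in (W ∩ {x | 0 < p x}) ∪ (W ∩ {x | ¬ 0 < p x}), (if 0 < p x then c1 else c2) := by
        rw [← hu]
    _ = (volume W).toReal / 2 * c1 + (volume W).toReal / 2 * c2 := by
        rw [setIntegral_union ?disj (hW.inter hposc)
          (hint.mono_set Set.inter_subset_left) (hint.mono_set Set.inter_subset_left), e1, e2]
        case disj =>
          exact Set.disjoint_left.mpr fun x hx hx' => hx'.2 hx.2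
    _ = (volume W).toReal / 2 * (c1 + c2) := by ring


lemma hasFDerivAt_aff (a b c : ℝ) (x : ℝ × ℝ) :
    HasFDerivAt (fun y : ℝ×ℝ => a + (b * y.1 + c * y.2))
      (b • ContinuousLinearMap.fst ℝ ℝ ℝ + c • ContinuousLinearMap.snd ℝ ℝ ℝ) x := by
  have h1 : HasFDerivAt (fun y : ℝ×ℝ => b * y.1) (b • ContinuousLinearMap.fst ℝ ℝ ℝ) x :=
    hasFDerivAt_fst.const_mul b
  have h2 : HasFDerivAt (fun y : ℝ×ℝ => c * y.2) (c • ContinuousLinearMap.snd ℝ ℝ ℝ) x :=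
    hasFDerivAt_snd.const_mul c
  exact (h1.add h2).const_add a

lemma diff_aff (a b c : ℝ) (x : ℝ×ℝ) :
    DifferentiableAt ℝ (fun y : ℝ×ℝ => a + (b * y.1 + c * y.2)) x :=
  (hasFDerivAt_aff a b c x).differentiableAt

lemma grad_aff (a b c : ℝ) (x : ℝ×ℝ) :
    grad (fun y : ℝ×ℝ => a + (b * y.1 + c * y.2)) x = (b, c) := by
  unfold grad
  rw [(hasFDerivAt_aff a b c x).fderiv]
  simp

lemma grad_congr {f g : ℝ×ℝ → ℝ} {x : ℝ×ℝ} (h : f =ᶠ[nhds x] g) : grad f x = grad g x := by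
  unfold grad; rw [h.fderiv_eq]

lemma locally_aff {f : ℝ×ℝ → ℝ} {O : Set (ℝ×ℝ)} (hO : IsOpen O) {x : ℝ×ℝ} (hx : x ∈ O)
    (a b c : ℝ) (hf : ∀ y ∈ O, f y = a + (b * y.1 + c * y.2)) :
    DifferentiableAt ℝ f x ∧ grad f x = (b, c) := by
  have he : f =ᶠ[nhds x] (fun y : ℝ×ℝ => a + (b * y.1 + c * y.2)) := by
    filter_upwards [hO.mem_nhds hx] with y hy using hf y hy
  exact ⟨he.differentiableAt_iff.mpr (diff_aff a b c x), by rw [grad_congr he, grad_aff]⟩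


noncomputable def swapCLM : (ℝ × ℝ) →L[ℝ] (ℝ × ℝ) :=
  (ContinuousLinearMap.snd ℝ ℝ ℝ).prod (ContinuousLinearMap.fst ℝ ℝ ℝ)

lemma hasFDerivAt_swap (x : ℝ×ℝ) : HasFDerivAt (fun z : ℝ×ℝ => ((z.2, z.1) : ℝ×ℝ)) swapCLM x :=
  swapCLM.hasFDerivAt

lemma diff_negswap_iff (ψ' : ℝ×ℝ→ℝ) (x : ℝ×ℝ) :
    DifferentiableAt ℝ (fun z : ℝ×ℝ => -ψ' (z.2, z.1)) x ↔ DifferentiableAt ℝ ψ' (x.2, x.1) := by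
  constructor
  · intro h
    have h2 : DifferentiableAt ℝ (fun z : ℝ×ℝ => -(-ψ' ((z.2,z.1).2, (z.2,z.1).1))) (x.2, x.1) :=
      ((h.comp (x.2,x.1) (hasFDerivAt_swap (x.2,x.1)).differentiableAt)).neg
    simpa using h2
  · intro h
    exact (h.comp x (hasFDerivAt_swap x).differentiableAt).neg

lemma grad_negswap {ψ' : ℝ×ℝ→ℝ} {x : ℝ×ℝ} (hd : DifferentiableAt ℝ ψ' (x.2, x.1)) :
    grad (fun z : ℝ×ℝ => -ψ' (z.2, z.1)) x
      = (-(grad ψ' (x.2,x.1)).2, -(grad ψ' (x.2,x.1)).1) := by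
  have hc : HasFDerivAt (fun z : ℝ×ℝ => -ψ' (z.2, z.1))
      (-((fderiv ℝ ψ' (x.2,x.1)).comp swapCLM)) x :=
    (hd.hasFDerivAt.comp x (hasFDerivAt_swap x)).neg
  unfold grad
  rw [hc.fderiv]
  simp [swapCLM]

lemma sigma_grad_negswap (σ : ℝ×ℝ→ℝ) (ψ' : ℝ×ℝ→ℝ) (x : ℝ×ℝ) :
    σ (grad (fun z : ℝ×ℝ => -ψ' (z.2,z.1)) x)
      = (fun ρ : ℝ×ℝ => σ (-ρ.2, -ρ.1)) (grad ψ' (x.2,x.1)) := by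
  by_cases hd : DifferentiableAt ℝ ψ' (x.2, x.1)
  · rw [grad_negswap hd]
  · have h1 : ¬ DifferentiableAt ℝ (fun z : ℝ×ℝ => -ψ' (z.2,z.1)) x :=
      fun h => hd ((diff_negswap_iff ψ' x).mp h)
    unfold grad
    rw [fderiv_zero_of_not_differentiableAt hd, fderiv_zero_of_not_differentiableAt h1]
    simp

lemma sconv_negswap (σ : ℝ×ℝ→ℝ) (hσ : StrictConvexOn ℝ Set.univ σ) :
    StrictConvexOn ℝ Set.univ (fun ρ : ℝ×ℝ => σ (-ρ.2, -ρ.1)) := by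
  refine ⟨convex_univ, ?_⟩
  intro x _ y _ hxy a b ha hb hab
  have hxy' : ((-x.2, -x.1) : ℝ×ℝ) ≠ (-y.2, -y.1) := by
    intro h
    apply hxy
    rw [Prod.ext_iff] at h ⊢
    obtain ⟨h1, h2⟩ := h
    exact ⟨by linarith [neg_injective h2], by linarith [neg_injective h1]⟩
  have := hσ.2 (Set.mem_univ ((-x.2, -x.1) : ℝ×ℝ)) (Set.mem_univ ((-y.2, -y.1) : ℝ×ℝ))
    hxy' ha hb hab
  have hpt : a • ((-x.2, -x.1) : ℝ×ℝ) + b • ((-y.2, -y.1) : ℝ×ℝ)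
      = (-(a • x + b • y).2, -(a • x + b • y).1) := by
    simp [Prod.ext_iff]; constructor <;> ring
  rw [hpt] at this
  exact this


lemma eps_choice (n : ℕ) (hn : 1 ≤ n) (σ : ℝ×ℝ → ℝ) (hσc : Continuous σ)
    (hσ : StrictConvexOn ℝ Set.univ σ) :
    ∃ e : ℝ, 0 < e ∧ e ≤ 1 ∧
      σ (e * n, 0) + σ (-(e * n), 0) < σ (0, (n : ℝ)) + σ (0, -(n : ℝ)) := by
  have hn' : (0:ℝ) < n := by exact_mod_cast hn
  have hne : ((0 : ℝ), (n:ℝ)) ≠ ((0 : ℝ), -(n:ℝ)) := by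
    intro h
    rw [Prod.ext_iff] at h
    have h2 := h.2
    simp only at h2
    linarith
  have hmid := hσ.2 (Set.mem_univ ((0:ℝ),(n:ℝ))) (Set.mem_univ ((0:ℝ),-(n:ℝ))) hne
    (by norm_num : (0:ℝ) < 1/2) (by norm_num : (0:ℝ) < 1/2) (by norm_num : (1/2:ℝ)+1/2 = 1)
  have hpt : (1/2 : ℝ) • ((0:ℝ),(n:ℝ)) + (1/2 : ℝ) • ((0:ℝ),-(n:ℝ)) = ((0:ℝ), (0:ℝ)) := by
    simp [Prod.ext_iff]
  rw [hpt] at hmid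
  rw [smul_eq_mul, smul_eq_mul] at hmid
  have hmid' : 2 * σ (0, 0) < σ (0, (n:ℝ)) + σ (0, -(n:ℝ)) := by linarith
  have hφc : Continuous (fun t : ℝ => σ (t*n, 0) + σ (-(t*n), 0)) := by
    apply Continuous.add
    · exact hσc.comp (by continuity)
    · exact hσc.comp (by continuity)
  have hopen : IsOpen {t : ℝ | σ (t*n, 0) + σ (-(t*n), 0) < σ (0, (n:ℝ)) + σ (0, -(n:ℝ))} :=
    isOpen_lt hφc continuous_const
  have h0 : (0:ℝ) ∈ {t : ℝ | σ (t*n, 0) + σ (-(t*n), 0) < σ (0, (n:ℝ)) + σ (0, -(n:ℝ))} := by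
    simp only [Set.mem_setOf_eq, zero_mul, neg_zero]
    linarith
  obtain ⟨δ, hδ, hball⟩ := Metric.isOpen_iff.mp hopen 0 h0
  refine ⟨min (δ/2) 1, by positivity, min_le_right _ _, ?_⟩
  have : min (δ/2) 1 ∈ Metric.ball (0:ℝ) δ := by
    rw [Metric.mem_ball, Real.dist_eq, sub_zero, abs_of_pos (by positivity)]
    calc min (δ/2) 1 ≤ δ/2 := min_le_left _ _
      _ < δ := by linarith
  exact hball this


lemma lip_psiPlus (n : ℕ) : LipschitzWith (n : NNReal) (psiPlus n) := by
  apply LipschitzWith.of_dist_le_mul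
  intro x y
  have hc : ((n : NNReal) : ℝ) = (n : ℝ) := by simp
  rw [hc, Real.dist_eq]
  have h1 : psiPlus n x - psiPlus n y = (n:ℝ) * (|y.2| - |x.2|) := by unfold psiPlus; ring
  have h2 : |y.2 - x.2| ≤ dist x y := by
    rw [abs_sub_comm, ← Real.dist_eq]
    exact (le_max_right _ _).trans_eq Prod.dist_eq.symm
  rw [h1, abs_mul, abs_of_nonneg (Nat.cast_nonneg n)]
  have h3 := abs_abs_sub_abs_le_abs_sub y.2 x.2
  nlinarith [Nat.cast_nonneg (α := ℝ) n, abs_nonneg (y.2 - x.2)]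

lemma lip_gfun (n : ℕ) (e : ℝ) (he : 0 < e) (he1 : e ≤ 1) :
    LipschitzWith (n : NNReal) (fun x : ℝ×ℝ => e * n * |x.1| + (1/4 - e/2)) := by
  apply LipschitzWith.of_dist_le_mul
  intro x y
  have hc : ((n : NNReal) : ℝ) = (n : ℝ) := by simp
  rw [hc, Real.dist_eq]
  have h1 : (e * n * |x.1| + (1/4 - e/2)) - (e * n * |y.1| + (1/4 - e/2))
      = e * n * (|x.1| - |y.1|) := by ring
  have h2 : |x.1 - y.1| ≤ dist x y := by
    rw [← Real.dist_eq]
    exact (le_max_left _ _).trans_eq Prod.dist_eq.symm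
  rw [h1, abs_mul, abs_of_nonneg (by positivity : (0:ℝ) ≤ e * n)]
  have h4 : |(|x.1| - |y.1|)| ≤ dist x y := (abs_abs_sub_abs_le_abs_sub x.1 y.1).trans h2
  calc e * ↑n * |(|x.1| - |y.1|)| ≤ e * ↑n * dist x y :=
        mul_le_mul_of_nonneg_left h4 (by positivity)
    _ = e * (↑n * dist x y) := by ring
    _ ≤ 1 * (↑n * dist x y) := mul_le_mul_of_nonneg_right he1 (by positivity)
    _ = ↑n * dist x y := one_mul _

end Aux

section Core

open Filter Topology Set

set_option maxHeartbeats 2000000 in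
lemma core (n : ℕ) (hn : 1 ≤ n) (σ : ℝ × ℝ → ℝ)
    (hσc : Continuous σ) (hσ : StrictConvexOn ℝ Set.univ σ) :
    (∃ (K : NNReal) (ψ : ℝ × ℝ → ℝ), LipschitzWith K ψ ∧
      (∀ x ∈ bdQ n, ψ x = psiBd n x) ∧
      (∀ᵐ x : ℝ × ℝ ∂volume, x ∈ Qset n → DifferentiableAt ℝ ψ x ∧ grad ψ x ∈ NP n) ∧
      ∫ x in Qset n, σ (grad ψ x) < ∫ x in Qset n, σ (grad (psiPlus n) x)) ∧
    (∫ x in Qset n, σ (grad (psiPlus n) x)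
        = (volume (Qset n)).toReal / 2 * (σ (0, (n : ℝ)) + σ (0, -(n : ℝ)))) := by
  have hn' : (0:ℝ) < n := by exact_mod_cast hn
  have hn1 : (1:ℝ) ≤ n := by exact_mod_cast hn
  obtain ⟨e, he, he1, hlt⟩ := eps_choice n hn σ hσc hσ
  -- basic measurability / finiteness
  have hcQ : Continuous (fun x : ℝ×ℝ => |x.1| + |x.2|) :=
    continuous_fst.abs.add continuous_snd.abs
  have hQm : MeasurableSet (Qset n) := measurableSet_le hcQ.measurable measurable_const
  have hQsub : Qset n ⊆ Set.Icc (-1:ℝ) 1 ×ˢ Set.Icc (-1:ℝ) 1 := by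
    intro x hx
    have hx' : |x.1| + |x.2| ≤ 1/(2*(n:ℝ)) := hx
    have hb : (1:ℝ)/(2*(n:ℝ)) ≤ 1 := by
      rw [div_le_one (by positivity)]; linarith
    have h1 : |x.1| ≤ 1 := by nlinarith [abs_nonneg x.2]
    have h2 : |x.2| ≤ 1 := by nlinarith [abs_nonneg x.1]
    exact ⟨Set.mem_Icc.mpr (abs_le.mp h1), Set.mem_Icc.mpr (abs_le.mp h2)⟩
  have hQfin : volume (Qset n) ≠ ⊤ := by
    refine ne_top_of_le_ne_top ?_ (measure_mono hQsub)
    rw [Measure.volume_eq_prod, Measure.prod_prod]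
    exact ENNReal.mul_ne_top (by simp [Real.volume_Icc]) (by simp [Real.volume_Icc])
  -- the competitor
  set g : ℝ×ℝ → ℝ := fun x => e * ↑n * |x.1| + (1/4 - e/2) with hgdef
  set ψ : ℝ×ℝ → ℝ := fun x => psiPlus n x ⊓ g x with hψdef
  have hcR : Continuous (fun x : ℝ×ℝ => e * ↑n * |x.1| + ↑n * |x.2|) :=
    (continuous_const.mul continuous_fst.abs).add (continuous_const.mul continuous_snd.abs)
  set R : Set (ℝ×ℝ) := {x | e * ↑n * |x.1| + ↑n * |x.2| < e/2} with hRdef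
  set S : Set (ℝ×ℝ) := {x | e/2 < e * ↑n * |x.1| + ↑n * |x.2|} with hSdef
  set E : Set (ℝ×ℝ) := {x | e * ↑n * |x.1| + ↑n * |x.2| = e/2} with hEdef
  have hRopen : IsOpen R := isOpen_lt hcR continuous_const
  have hSopen : IsOpen S := isOpen_lt continuous_const hcR
  have hRm : MeasurableSet R := hRopen.measurableSet
  have hRQ : R ⊆ Qset n := by
    intro x hx
    have hx' : e * ↑n * |x.1| + ↑n * |x.2| < e/2 := hx
    show |x.1| + |x.2| ≤ 1/(2*(n:ℝ))
    have h1 : e * (↑n * |x.1|) < e/2 := by nlinarith [abs_nonneg x.2]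
    have h2 : ↑n * |x.1| < 1/2 := by nlinarith
    have h3 : ↑n * |x.1| + ↑n * |x.2| < 1/2 := by nlinarith [abs_nonneg x.1]
    rw [le_div_iff₀ (by positivity)]
    nlinarith
  have hRfin : volume R ≠ ⊤ := ne_top_of_le_ne_top hQfin (measure_mono hRQ)
  have hR0 : (0 : ℝ×ℝ) ∈ R := by
    show e * ↑n * |(0:ℝ×ℝ).1| + ↑n * |(0:ℝ×ℝ).2| < e/2
    norm_num
    positivity
  have hRpos : 0 < (volume R).toReal :=
    ENNReal.toReal_pos (hRopen.measure_pos volume ⟨0, hR0⟩).ne' hRfin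
  have hEm : MeasurableSet E := measurableSet_eq_fun hcR.measurable measurable_const
  have hEnull : volume E = 0 := by
    rw [Measure.volume_eq_prod, Measure.measure_prod_null hEm]
    refine Filter.Eventually.of_forall (fun t => ?_)
    have hsub : Prod.mk t ⁻¹' E ⊆ {(e/2 - e*↑n*|t|)/n, -((e/2 - e*↑n*|t|)/n)} := by
      intro y hy
      have hy' : e * ↑n * |t| + ↑n * |y| = e/2 := hy
      have hyv : |y| = (e/2 - e*↑n*|t|)/n := by field_simp; linarith
      rcases abs_choice y with h | h
      · have : y = (e/2 - e*↑n*|t|)/n := by rw [← hyv, h]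
        simp [this]
      · have : y = -((e/2 - e*↑n*|t|)/n) := by rw [← hyv]; linarith
        simp [this]
    simpa using measure_mono_null hsub (Set.Finite.measure_zero (Set.toFinite _) volume)
  -- a.e. facts
  have hae1 : ∀ᵐ x : ℝ×ℝ ∂volume, x.1 ≠ 0 := by
    rw [ae_iff]
    have h : {x : ℝ×ℝ | ¬ x.1 ≠ 0} = {x : ℝ×ℝ | x.1 = 0} := by ext x; simp
    rw [h]; exact null_fst
  have hae2 : ∀ᵐ x : ℝ×ℝ ∂volume, x.2 ≠ 0 := by
    rw [ae_iff]
    have h : {x : ℝ×ℝ | ¬ x.2 ≠ 0} = {x : ℝ×ℝ | x.2 = 0} := by ext x; simp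
    rw [h]; exact null_snd
  have haeE : ∀ᵐ x : ℝ×ℝ ∂volume, x ∉ E := by
    rw [ae_iff]
    have h : {x : ℝ×ℝ | ¬ x ∉ E} = E := by ext x; simp
    rw [h]; exact hEnull
  -- gradient computations
  have hplus_pos : ∀ x : ℝ×ℝ, 0 < x.2 →
      DifferentiableAt ℝ (psiPlus n) x ∧ grad (psiPlus n) x = (0, -(n:ℝ)) := by
    intro x hx
    refine locally_aff (isOpen_lt continuous_const continuous_snd) hx (1/4) 0 (-(n:ℝ)) ?_
    intro y hy
    have h : |y.2| = y.2 := abs_of_pos hy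
    unfold psiPlus; rw [h]; ring
  have hplus_neg : ∀ x : ℝ×ℝ, x.2 < 0 →
      DifferentiableAt ℝ (psiPlus n) x ∧ grad (psiPlus n) x = (0, (n:ℝ)) := by
    intro x hx
    refine locally_aff (isOpen_lt continuous_snd continuous_const) hx (1/4) 0 ((n:ℝ)) ?_
    intro y hy
    have h : |y.2| = -y.2 := abs_of_neg hy
    unfold psiPlus; rw [h]; ring
  have hψR : ∀ y ∈ R, ψ y = g y := by
    intro y hy
    have hy' : e * ↑n * |y.1| + ↑n * |y.2| < e/2 := hy
    refine inf_eq_right.mpr (le_of_lt ?_)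
    show e * ↑n * |y.1| + (1/4 - e/2) < psiPlus n y
    unfold psiPlus; linarith
  have hψS : ∀ y ∈ S, ψ y = psiPlus n y := by
    intro y hy
    have hy' : e/2 < e * ↑n * |y.1| + ↑n * |y.2| := hy
    refine inf_eq_left.mpr (le_of_lt ?_)
    show psiPlus n y < e * ↑n * |y.1| + (1/4 - e/2)
    unfold psiPlus; linarith
  have hψR_pos : ∀ x ∈ R, 0 < x.1 →
      DifferentiableAt ℝ ψ x ∧ grad ψ x = (e*↑n, 0) := by
    intro x hxR hx1
    refine locally_aff (hRopen.inter (isOpen_lt continuous_const continuous_fst))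
      ⟨hxR, hx1⟩ (1/4 - e/2) (e*↑n) 0 ?_
    rintro y ⟨hyR, hy1⟩
    rw [hψR y hyR, hgdef]
    simp only
    rw [abs_of_pos hy1]; ring
  have hψR_neg : ∀ x ∈ R, x.1 < 0 →
      DifferentiableAt ℝ ψ x ∧ grad ψ x = (-(e*↑n), 0) := by
    intro x hxR hx1
    refine locally_aff (hRopen.inter (isOpen_lt continuous_fst continuous_const))
      ⟨hxR, hx1⟩ (1/4 - e/2) (-(e*↑n)) 0 ?_
    rintro y ⟨hyR, hy1⟩
    rw [hψR y hyR, hgdef]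
    simp only
    rw [abs_of_neg hy1]; ring
  have hψS_pos : ∀ x ∈ S, 0 < x.2 →
      DifferentiableAt ℝ ψ x ∧ grad ψ x = (0, -(n:ℝ)) := by
    intro x hxS hx2
    refine locally_aff (hSopen.inter (isOpen_lt continuous_const continuous_snd))
      ⟨hxS, hx2⟩ (1/4) 0 (-(n:ℝ)) ?_
    rintro y ⟨hyS, hy2⟩
    rw [hψS y hyS]
    unfold psiPlus; rw [abs_of_pos hy2]; ring
  have hψS_neg : ∀ x ∈ S, x.2 < 0 →
      DifferentiableAt ℝ ψ x ∧ grad ψ x = (0, (n:ℝ)) := by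
    intro x hxS hx2
    refine locally_aff (hSopen.inter (isOpen_lt continuous_snd continuous_const))
      ⟨hxS, hx2⟩ (1/4) 0 ((n:ℝ)) ?_
    rintro y ⟨hyS, hy2⟩
    rw [hψS y hyS]
    unfold psiPlus; rw [abs_of_neg hy2]; ring
  have hcase : ∀ x : ℝ×ℝ, x ∉ E → x ∉ R → x ∈ S := by
    intro x hxE hxR
    have h1 : ¬ (e * ↑n * |x.1| + ↑n * |x.2| < e/2) := hxR
    have h2 : ¬ (e * ↑n * |x.1| + ↑n * |x.2| = e/2) := hxE
    show e/2 < e * ↑n * |x.1| + ↑n * |x.2|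
    rcases lt_trichotomy (e * ↑n * |x.1| + ↑n * |x.2|) (e/2) with h | h | h
    · exact absurd h h1
    · exact absurd h h2
    · exact h
  -- the piecewise-constant representatives
  set F : ℝ×ℝ → ℝ := fun x => if 0 < x.2 then σ (0, -(n:ℝ)) else σ (0, (n:ℝ)) with hF
  set G : ℝ×ℝ → ℝ := fun x => if e * ↑n * |x.1| + ↑n * |x.2| < e/2 then
      (if 0 < x.1 then σ (e*↑n, 0) else σ (-(e*↑n), 0)) else F x with hG
  have hIplus : ∫ x in Qset n, σ (grad (psiPlus n) x) = ∫ x in Qset n, F x := by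
    refine setIntegral_congr_ae hQm ?_
    filter_upwards [hae2] with x hx2 hxQ
    rcases hx2.lt_or_gt with h | h
    · rw [(hplus_neg x h).2, hF]
      simp only
      rw [if_neg (not_lt.mpr h.le)]
    · rw [(hplus_pos x h).2, hF]
      simp only
      rw [if_pos h]
  have hQflip : (fun x : ℝ×ℝ => (x.1, -x.2)) ⁻¹' (Qset n) = Qset n := by
    ext x
    show |x.1| + |-x.2| ≤ 1/(2*(n:ℝ)) ↔ |x.1| + |x.2| ≤ 1/(2*(n:ℝ))
    rw [abs_neg]
  have hFint : ∫ x in Qset n, F x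
      = (volume (Qset n)).toReal/2 * (σ (0, -(n:ℝ)) + σ (0, (n:ℝ))) := by
    rw [hF]
    exact integral_if (Qset n) hQm hQfin (fun x => x.2) continuous_snd null_snd
      (fun x : ℝ×ℝ => (x.1, -x.2)) mp_flip2 hQflip (fun x => rfl) _ _
  have hconj2 : ∫ x in Qset n, σ (grad (psiPlus n) x)
      = (volume (Qset n)).toReal / 2 * (σ (0, (n:ℝ)) + σ (0, -(n:ℝ))) := by
    rw [hIplus, hFint]; ring
  have hIψ : ∫ x in Qset n, σ (grad ψ x) = ∫ x in Qset n, G x := by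
    refine setIntegral_congr_ae hQm ?_
    filter_upwards [hae1, hae2, haeE] with x h1 h2 hE hxQ
    by_cases hxR : x ∈ R
    · have hcond : e * ↑n * |x.1| + ↑n * |x.2| < e/2 := hxR
      rcases h1.lt_or_gt with hneg | hpos
      · rw [(hψR_neg x hxR hneg).2, hG]
        simp only
        rw [if_pos hcond, if_neg (not_lt.mpr hneg.le)]
      · rw [(hψR_pos x hxR hpos).2, hG]
        simp only
        rw [if_pos hcond, if_pos hpos]
    · have hxS : x ∈ S := hcase x hE hxR
      have hcond : ¬ (e * ↑n * |x.1| + ↑n * |x.2| < e/2) := hxR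
      rcases h2.lt_or_gt with hneg | hpos
      · rw [(hψS_neg x hxS hneg).2, hG]
        simp only
        rw [if_neg hcond, hF]
        simp only
        rw [if_neg (not_lt.mpr hneg.le)]
      · rw [(hψS_pos x hxS hpos).2, hG]
        simp only
        rw [if_neg hcond, hF]
        simp only
        rw [if_pos hpos]
  have hGR : Set.EqOn G (fun x : ℝ×ℝ => if 0 < x.1 then σ (e*↑n, 0) else σ (-(e*↑n), 0)) R := by
    intro x hx
    have hcond : e * ↑n * |x.1| + ↑n * |x.2| < e/2 := hx
    rw [hG]
    simp only
    rw [if_pos hcond]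
  have hGQR : Set.EqOn G F (Qset n \ R) := by
    intro x hx
    have hcond : ¬ (e * ↑n * |x.1| + ↑n * |x.2| < e/2) := hx.2
    rw [hG]
    simp only
    rw [if_neg hcond]
  have hQRm : MeasurableSet (Qset n \ R) := hQm.diff hRm
  have hQRfin : volume (Qset n \ R) ≠ ⊤ :=
    ne_top_of_le_ne_top hQfin (measure_mono Set.diff_subset)
  have hFintR : IntegrableOn F R volume := by
    rw [hF]; exact integrableOn_if R hRfin (fun x => x.2) continuous_snd _ _
  have hFintQR : IntegrableOn F (Qset n \ R) volume := by
    rw [hF]; exact integrableOn_if _ hQRfin (fun x => x.2) continuous_snd _ _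
  have hGintR : IntegrableOn G R volume :=
    (integrableOn_if R hRfin (fun x => x.1) continuous_fst (σ (e*↑n, 0))
      (σ (-(e*↑n), 0))).congr_fun hGR.symm hRm
  have hGintQR : IntegrableOn G (Qset n \ R) volume :=
    hFintQR.congr_fun hGQR.symm hQRm
  have hsplit : ∀ (H : ℝ×ℝ → ℝ), IntegrableOn H R volume →
      IntegrableOn H (Qset n \ R) volume →
      ∫ x in Qset n, H x = (∫ x in R, H x) + ∫ x in Qset n \ R, H x := by
    intro H hr hqr
    have h := setIntegral_union Set.disjoint_sdiff_right hQRm hr hqr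
    rwa [Set.union_diff_cancel hRQ] at h
  have hRflip1 : (fun x : ℝ×ℝ => (-x.1, x.2)) ⁻¹' R = R := by
    ext x
    simp only [Set.mem_preimage, hRdef, Set.mem_setOf_eq, abs_neg]
  have hRflip2 : (fun x : ℝ×ℝ => (x.1, -x.2)) ⁻¹' R = R := by
    ext x
    simp only [Set.mem_preimage, hRdef, Set.mem_setOf_eq, abs_neg]
  have hGRint : ∫ x in R, G x = (volume R).toReal/2 * (σ (e*↑n, 0) + σ (-(e*↑n), 0)) := by
    rw [setIntegral_congr_fun hRm hGR]
    exact integral_if R hRm hRfin (fun x => x.1) continuous_fst null_fst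
      (fun x : ℝ×ℝ => (-x.1, x.2)) mp_flip1 hRflip1 (fun x => rfl) _ _
  have hFRint : ∫ x in R, F x = (volume R).toReal/2 * (σ (0, -(n:ℝ)) + σ (0, (n:ℝ))) := by
    rw [hF]
    exact integral_if R hRm hRfin (fun x => x.2) continuous_snd null_snd
      (fun x : ℝ×ℝ => (x.1, -x.2)) mp_flip2 hRflip2 (fun x => rfl) _ _
  have hGQRint : ∫ x in Qset n \ R, G x = ∫ x in Qset n \ R, F x :=
    setIntegral_congr_fun hQRm hGQR
  have hcomp : ∫ x in Qset n, G x < ∫ x in Qset n, F x := by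
    rw [hsplit G hGintR hGintQR, hsplit F hFintR hFintQR, hGRint, hFRint, hGQRint]
    have hd : σ (e*↑n, 0) + σ (-(e*↑n), 0) < σ (0, -(n:ℝ)) + σ (0, (n:ℝ)) := by linarith
    nlinarith [hRpos]
  -- NP membership of the four gradient values
  have hNP1 : ((e*↑n, 0) : ℝ×ℝ) ∈ NP n := by
    show |e*↑n| + |(0:ℝ)| ≤ (n:ℝ)
    rw [abs_of_nonneg (by positivity), abs_zero]
    nlinarith
  have hNP1' : ((-(e*↑n), 0) : ℝ×ℝ) ∈ NP n := by
    show |(-(e*↑n))| + |(0:ℝ)| ≤ (n:ℝ)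
    rw [abs_neg, abs_of_nonneg (by positivity), abs_zero]
    nlinarith
  have hNP2 : ((0, -(n:ℝ)) : ℝ×ℝ) ∈ NP n := by
    show |(0:ℝ)| + |(-(n:ℝ))| ≤ (n:ℝ)
    rw [abs_zero, abs_neg, abs_of_nonneg hn'.le]
    linarith
  have hNP2' : ((0, (n:ℝ)) : ℝ×ℝ) ∈ NP n := by
    show |(0:ℝ)| + |(n:ℝ)| ≤ (n:ℝ)
    rw [abs_zero, abs_of_nonneg hn'.le]
    linarith
  have haecond : ∀ᵐ x : ℝ×ℝ ∂volume, x ∈ Qset n →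
      DifferentiableAt ℝ ψ x ∧ grad ψ x ∈ NP n := by
    filter_upwards [hae1, hae2, haeE] with x h1 h2 hE _
    by_cases hxR : x ∈ R
    · rcases h1.lt_or_gt with hneg | hpos
      · obtain ⟨hd, hgr⟩ := hψR_neg x hxR hneg
        exact ⟨hd, by rw [hgr]; exact hNP1'⟩
      · obtain ⟨hd, hgr⟩ := hψR_pos x hxR hpos
        exact ⟨hd, by rw [hgr]; exact hNP1⟩
    · have hxS := hcase x hE hxR
      rcases h2.lt_or_gt with hneg | hpos
      · obtain ⟨hd, hgr⟩ := hψS_neg x hxS hneg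
        exact ⟨hd, by rw [hgr]; exact hNP2'⟩
      · obtain ⟨hd, hgr⟩ := hψS_pos x hxS hpos
        exact ⟨hd, by rw [hgr]; exact hNP2⟩
  have hbd : ∀ x ∈ bdQ n, ψ x = psiBd n x := by
    intro x hx
    have hx' : |x.1| + |x.2| = 1/(2*(n:ℝ)) := hx
    have hx2 : |x.2| = 1/(2*(n:ℝ)) - |x.1| := by linarith
    have hx1 : ↑n * |x.1| ≤ 1/2 := by
      have h : |x.1| ≤ 1/(2*(n:ℝ)) := by linarith [abs_nonneg x.2]
      calc (n:ℝ) * |x.1| ≤ (n:ℝ) * (1/(2*(n:ℝ))) := by nlinarith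
        _ = 1/2 := by field_simp
    have hps : psiPlus n x = ↑n * |x.1| - 1/4 := by
      unfold psiPlus
      rw [hx2]
      field_simp
      ring
    have hle : psiPlus n x ≤ g x := by
      rw [hps, hgdef]
      simp only
      nlinarith [mul_nonneg (by linarith : (0:ℝ) ≤ 1-e)
        (by linarith : (0:ℝ) ≤ 1/2 - ↑n*|x.1|)]
    rw [hψdef]
    simp only
    rw [inf_eq_left.mpr hle, hps]
    unfold psiBd
    rw [hx2]
    field_simp
    ring
  have hlip : LipschitzWith (n : NNReal) ψ := by
    have h := (lip_psiPlus n).min (lip_gfun n e he he1)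
    rw [sup_idem] at h
    exact h
  refine ⟨⟨(n : NNReal), ψ, hlip, hbd, haecond, ?_⟩, hconj2⟩
  rw [hIψ, hIplus]
  exact hcomp

end Core

section Main

open Filter Topology Set

/-- for continuous strictly convex `σ` there is a Lipschitz `ψ` with the
boundary value `ψ_∂Q`, gradient a.e. in `N`, whose surface-tension functional is strictly
smaller than that of `ψ⁺`; moreover `∫_Q σ(∇ψ⁺) = (|Q|/2)(σ(0,n)+σ(0,−n))`. In particular
`ψ⁺` is not the minimizer; the analogous statement holds for `ψ⁻`. -/
theorem stmt_3 (n : ℕ) (hn : 1 ≤ n) (σ : ℝ × ℝ → ℝ)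
    (hσc : Continuous σ) (hσ : StrictConvexOn ℝ Set.univ σ) :
    (∃ (K : NNReal) (ψ : ℝ × ℝ → ℝ), LipschitzWith K ψ ∧
      (∀ x ∈ bdQ n, ψ x = psiBd n x) ∧
      (∀ᵐ x : ℝ × ℝ ∂volume, x ∈ Qset n → DifferentiableAt ℝ ψ x ∧ grad ψ x ∈ NP n) ∧
      ∫ x in Qset n, σ (grad ψ x) < ∫ x in Qset n, σ (grad (psiPlus n) x)) ∧
    (∫ x in Qset n, σ (grad (psiPlus n) x)
        = (volume (Qset n)).toReal / 2 * (σ (0, (n : ℝ)) + σ (0, -(n : ℝ)))) ∧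
    (∃ (K : NNReal) (ψ : ℝ × ℝ → ℝ), LipschitzWith K ψ ∧
      (∀ x ∈ bdQ n, ψ x = psiBd n x) ∧
      (∀ᵐ x : ℝ × ℝ ∂volume, x ∈ Qset n → DifferentiableAt ℝ ψ x ∧ grad ψ x ∈ NP n) ∧
      ∫ x in Qset n, σ (grad ψ x) < ∫ x in Qset n, σ (grad (psiMinus n) x)) ∧
    (∫ x in Qset n, σ (grad (psiMinus n) x)
        = (volume (Qset n)).toReal / 2 * (σ ((n : ℝ), 0) + σ (-(n : ℝ), 0))) := by
  obtain ⟨hex, heq⟩ := core n hn σ hσc hσ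
  set σ' : ℝ×ℝ → ℝ := fun ρ => σ (-ρ.2, -ρ.1) with hσ'def
  have hσ'c : Continuous σ' :=
    hσc.comp ((continuous_snd.neg).prodMk (continuous_fst.neg))
  obtain ⟨hex', heq'⟩ := core n hn σ' hσ'c (sconv_negswap σ hσ)
  obtain ⟨K, ψ', hlip', hbd', hae', hint'⟩ := hex'
  have hQm : MeasurableSet (Qset n) :=
    measurableSet_le (continuous_fst.abs.add continuous_snd.abs).measurable measurable_const
  have hQswap : (Prod.swap : ℝ×ℝ → ℝ×ℝ) ⁻¹' (Qset n) = Qset n := by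
    ext x
    show |x.2| + |x.1| ≤ 1/(2*(n:ℝ)) ↔ |x.1| + |x.2| ≤ 1/(2*(n:ℝ))
    rw [add_comm]
  have hswapint : ∀ f : ℝ×ℝ → ℝ,
      (∫ x in Qset n, f (x.2, x.1)) = ∫ y in Qset n, f y := by
    intro f
    have h := mp_swap.setIntegral_preimage_emb
      ((MeasurableEquiv.prodComm (α := ℝ) (β := ℝ)).measurableEmbedding) f (Qset n)
    rw [hQswap] at h
    exact h
  -- the transferred competitor
  have hlipψ : LipschitzWith K (fun z : ℝ×ℝ => -ψ' (z.2, z.1)) := by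
    apply LipschitzWith.of_dist_le_mul
    intro x y
    have hd : dist ((x.2, x.1) : ℝ×ℝ) ((y.2, y.1) : ℝ×ℝ) = dist x y := by
      rw [Prod.dist_eq, Prod.dist_eq]
      exact max_comm _ _
    calc dist (-ψ' (x.2, x.1)) (-ψ' (y.2, y.1))
        = dist (ψ' (x.2, x.1)) (ψ' (y.2, y.1)) := dist_neg_neg _ _
      _ ≤ K * dist ((x.2, x.1) : ℝ×ℝ) ((y.2, y.1) : ℝ×ℝ) := hlip'.dist_le_mul _ _
      _ = K * dist x y := by rw [hd]
  have hbdψ : ∀ x ∈ bdQ n, (fun z : ℝ×ℝ => -ψ' (z.2, z.1)) x = psiBd n x := by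
    intro x hx
    have hx0 : |x.1| + |x.2| = 1/(2*(n:ℝ)) := hx
    have hx' : ((x.2, x.1) : ℝ×ℝ) ∈ bdQ n := by
      show |x.2| + |x.1| = 1/(2*(n:ℝ))
      rw [add_comm]; exact hx0
    show -ψ' (x.2, x.1) = psiBd n x
    rw [hbd' _ hx']
    unfold psiBd
    simp only
    ring
  have haeψ : ∀ᵐ x : ℝ×ℝ ∂volume, x ∈ Qset n →
      DifferentiableAt ℝ (fun z : ℝ×ℝ => -ψ' (z.2, z.1)) x ∧
      grad (fun z : ℝ×ℝ => -ψ' (z.2, z.1)) x ∈ NP n := by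
    rw [ae_iff] at hae' ⊢
    refine measure_mono_null ?_ (mp_swap.quasiMeasurePreserving.preimage_null hae')
    intro x hx
    simp only [Set.mem_setOf_eq] at hx
    simp only [Set.mem_preimage, Set.mem_setOf_eq]
    intro hcon
    apply hx
    intro hxQ
    have hxQ' : ((x.2, x.1) : ℝ×ℝ) ∈ Qset n := by
      show |x.2| + |x.1| ≤ 1/(2*(n:ℝ))
      rw [add_comm]; exact hxQ
    obtain ⟨hd', hg'⟩ := hcon hxQ'
    refine ⟨(diff_negswap_iff ψ' x).mpr hd', ?_⟩
    rw [grad_negswap hd']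
    have hg'' : |(grad ψ' (x.2, x.1)).1| + |(grad ψ' (x.2, x.1)).2| ≤ (n:ℝ) := hg'
    show |(-(grad ψ' (x.2, x.1)).2)| + |(-(grad ψ' (x.2, x.1)).1)| ≤ (n:ℝ)
    rw [abs_neg, abs_neg, add_comm]
    exact hg''
  have hIψeq : (∫ x in Qset n, σ (grad (fun z : ℝ×ℝ => -ψ' (z.2, z.1)) x))
      = ∫ y in Qset n, σ' (grad ψ' y) := by
    rw [setIntegral_congr_fun hQm (fun x _ => sigma_grad_negswap σ ψ' x)]
    exact hswapint (fun y => σ' (grad ψ' y))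
  have hIminus : (∫ x in Qset n, σ (grad (psiMinus n) x))
      = ∫ y in Qset n, σ' (grad (psiPlus n) y) := by
    have hfun : psiMinus n = (fun z : ℝ×ℝ => -psiPlus n (z.2, z.1)) := by
      funext z; unfold psiMinus psiPlus; ring
    rw [hfun, setIntegral_congr_fun hQm (fun x _ => sigma_grad_negswap σ (psiPlus n) x)]
    exact hswapint (fun y => σ' (grad (psiPlus n) y))
  have hval : σ' (0, (n:ℝ)) + σ' (0, -(n:ℝ)) = σ ((n:ℝ), 0) + σ (-(n:ℝ), 0) := by
    rw [hσ'def]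
    simp only
    norm_num
    ring
  refine ⟨hex, heq, ⟨K, (fun z : ℝ×ℝ => -ψ' (z.2, z.1)), hlipψ, hbdψ, haeψ, ?_⟩, ?_⟩
  · rw [hIψeq, hIminus]
    exact hint'
  · rw [hIminus, heq', hval]

end Main
end

section
/- Let a, b ∈ ℂ be linearly independent over ℝ, and let χ : [0,∞) → ℝ be continuous with compact support. Then the function (θ,φ) ↦ χ(|aθ + bφ|)/(aθ + bφ), defined to be 0 at points where aθ + bφ = 0, is Lebesgue integrable on ℝ², and ∫_{ℝ²} χ(|aθ + bφ|)/(aθ + bφ) dθ dφ = 0. -/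
open MeasureTheory Measure Set


private lemma g_meas (χ : ℝ → ℝ) (hχ : Continuous χ) :
    Measurable (fun z : ℂ => (χ (‖z‖) : ℂ) / z) :=
  (Complex.measurable_ofReal.comp (hχ.measurable.comp continuous_norm.measurable)).div measurable_id

private lemma g_int (χ : ℝ → ℝ) (hχ : Continuous χ) (hsupp : HasCompactSupport χ) :
    Integrable (fun z : ℂ => (χ (‖z‖) : ℂ) / z) := by
  set g : ℂ → ℂ := fun z => (χ (‖z‖) : ℂ) / z with hgdef
  have hgm : Measurable g := g_meas χ hχ
  rw [← (Complex.volume_preserving_equiv_real_prod.symm).integrable_comp_emb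
    (Complex.measurableEquivRealProd.symm.measurableEmbedding)]
  set f : ℝ × ℝ → ℂ := g ∘ Complex.measurableEquivRealProd.symm with hfdef
  have hfm : Measurable f := hgm.comp Complex.measurableEquivRealProd.symm.measurable
  have key : IntegrableOn f polarCoord.source := by
    rw [← polarCoord.symm_image_target_eq_source]
    set B : ℝ × ℝ → ℝ × ℝ →L[ℝ] ℝ × ℝ := fun p =>
      LinearMap.toContinuousLinearMap (Matrix.toLin (Module.Basis.finTwoProd ℝ) (Module.Basis.finTwoProd ℝ)
        !![Real.cos p.2, -p.1 * Real.sin p.2; Real.sin p.2, p.1 * Real.cos p.2]) with hB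
    have B_det : ∀ p, (B p).det = p.1 := by
      intro p
      conv_rhs => rw [← one_mul p.1, ← Real.cos_sq_add_sin_sq p.2]
      simp only [hB, neg_mul, LinearMap.det_toContinuousLinearMap, LinearMap.det_toLin,
        Matrix.det_fin_two_of, sub_neg_eq_add]
      ring
    rw [integrableOn_image_iff_integrableOn_abs_det_fderiv_smul volume
      polarCoord.open_target.measurableSet
      (fun p _ => (hasFDerivAt_polarCoord_symm p).hasFDerivWithinAt) polarCoord.symm.injOn f]
    simp only [show ∀ p, (fderivPolarCoordSymm p).det = p.1 from B_det]
    have hbound : Integrable (fun p : ℝ × ℝ => |χ p.1|)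
        (volume.restrict polarCoord.target) := by
      have h1 : Integrable (fun x : ℝ => |χ x|) (volume.restrict (Ioi (0:ℝ))) :=
        ((hχ.abs).integrable_of_hasCompactSupport hsupp.abs).restrict
      have h2 : Integrable (fun _ : ℝ => (1:ℝ)) (volume.restrict (Ioo (-Real.pi) Real.pi)) :=
        integrable_const _
      have := h1.mul_prod h2
      rw [Measure.prod_restrict] at this
      simpa [Measure.volume_eq_prod] using this
    have hpm : Measurable (fun p : ℝ × ℝ => polarCoord.symm p) := by
      show Measurable fun p : ℝ × ℝ => (p.1 * Real.cos p.2, p.1 * Real.sin p.2)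
      exact (measurable_fst.mul (Real.continuous_cos.measurable.comp measurable_snd)).prodMk
        (measurable_fst.mul (Real.continuous_sin.measurable.comp measurable_snd))
    apply Integrable.mono' hbound
    · exact ((measurable_fst.abs).smul (hfm.comp hpm)).aestronglyMeasurable
    · filter_upwards [ae_restrict_mem polarCoord.open_target.measurableSet] with p hp
      have hp1 : 0 < p.1 := (mem_prod.1 hp).1
      have habs : ‖Complex.polarCoord.symm p‖ = |p.1| :=
        Complex.norm_polarCoord_symm p
      have hfp : f (polarCoord.symm p) = g (Complex.polarCoord.symm p) := rfl
      rw [norm_smul, hfp, hgdef]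
      simp only [norm_div, Complex.norm_real, habs,
        Real.norm_eq_abs, abs_abs, abs_of_pos hp1]
      rw [mul_div_cancel₀ _ hp1.ne']
  rw [← integrableOn_univ]
  exact key.congr_set_ae polarCoord_source_ae_eq_univ.symm


/-- let `a, b ∈ ℂ` be linearly independent over `ℝ`, and let `χ` be continuous
with compact support. Then `(θ,φ) ↦ χ(|aθ + bφ|)/(aθ + bφ)` (equal to `0` where
`aθ + bφ = 0`, which is the Lean convention for division by zero) is Lebesgue integrable on
`ℝ²` and its integral vanishes. -/
theorem stmt_5 (a b : ℂ) (hab : LinearIndependent ℝ ![a, b])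
    (χ : ℝ → ℝ) (hχ : Continuous χ) (hsupp : HasCompactSupport χ) :
    Integrable (fun p : ℝ × ℝ =>
      (χ (‖a * p.1 + b * p.2‖) : ℂ) / (a * p.1 + b * p.2)) ∧
    ∫ p : ℝ × ℝ, (χ (‖a * p.1 + b * p.2‖) : ℂ) / (a * p.1 + b * p.2) = 0 := by
  set g : ℂ → ℂ := fun z => (χ (‖z‖) : ℂ) / z with hgdef
  -- the continuous linear equivalence (θ, φ) ↦ a θ + b φ
  let bs : Module.Basis (Fin 2) ℝ ℂ :=
    basisOfLinearIndependentOfCardEqFinrank hab (by simp [Complex.finrank_real_complex])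
  let e : (ℝ × ℝ) ≃L[ℝ] ℂ :=
    ((LinearEquiv.finTwoArrow ℝ ℝ).symm ≪≫ₗ bs.equivFun.symm).toContinuousLinearEquiv
  have he : ∀ p : ℝ × ℝ, e p = a * p.1 + b * p.2 := by
    intro p
    show bs.equivFun.symm ((LinearEquiv.finTwoArrow ℝ ℝ).symm p) = _
    rw [Module.Basis.equivFun_symm_apply]
    have hbs : ⇑bs = ![a, b] := coe_basisOfLinearIndependentOfCardEqFinrank hab _
    simp [hbs, Fin.sum_univ_two, LinearEquiv.finTwoArrow, Complex.real_smul, mul_comm]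
  have hint : Integrable (fun p : ℝ × ℝ =>
      (χ (‖a * p.1 + b * p.2‖) : ℂ) / (a * p.1 + b * p.2)) := by
    have h1 : Integrable g := g_int χ hχ hsupp
    have hHaar : (Measure.map (⇑e) volume : Measure ℂ).IsAddHaarMeasure :=
      e.toAddEquiv.isAddHaarMeasure_map volume e.continuous e.symm.continuous
    have hmap := isAddLeftInvariant_eq_smul (Measure.map (⇑e) volume) (volume : Measure ℂ)
    have h2 : Integrable g (Measure.map (⇑e) volume) := by
      rw [hmap]
      exact h1.smul_measure_nnreal
    have h3 : Integrable (g ∘ e) volume :=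
      (e.toHomeomorph.measurableEmbedding.integrable_map_iff).1 h2
    have : (fun p : ℝ × ℝ =>
        (χ (‖a * p.1 + b * p.2‖) : ℂ) / (a * p.1 + b * p.2)) = g ∘ e := by
      funext p
      simp [hgdef, Function.comp, he p]
    rwa [this]
  refine ⟨hint, ?_⟩
  have hodd : ∀ p : ℝ × ℝ,
      (χ (‖a * (-p).1 + b * (-p).2‖) : ℂ) / (a * (-p).1 + b * (-p).2) =
      -((χ (‖a * p.1 + b * p.2‖) : ℂ) / (a * p.1 + b * p.2)) := by
    intro p
    have : a * ((-p).1 : ℝ) + b * ((-p).2 : ℝ) = -(a * p.1 + b * p.2) := by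
      simp [Prod.fst_neg, Prod.snd_neg, Complex.ofReal_neg]; ring
    rw [this, norm_neg, div_neg]
  set F : ℝ × ℝ → ℂ :=
    fun p => (χ (‖a * p.1 + b * p.2‖) : ℂ) / (a * p.1 + b * p.2) with hF
  have h1 : ∫ p, F (-p) = ∫ p, F p := integral_neg_eq_self F volume
  have h2 : ∫ p, F (-p) = -∫ p, F p := by
    simp_rw [hF, hodd]
    exact integral_neg _
  have h3 : (∫ p, F p) = -∫ p, F p := h1.symm.trans h2
  have h4 : (2 : ℂ) * ∫ p, F p = 0 := by
    rw [two_mul]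
    nth_rewrite 2 [h3]
    ring
  exact (mul_eq_zero.mp h4).resolve_left two_ne_zero
end

section
/- Let U, W ⊂ ℝ² be open, let ψ : W → ℝ be twice continuously differentiable, and let x : U → W be continuously differentiable with ∇ψ(x(ρ)) = ρ for every ρ ∈ U, and set v(ρ) = ψ(x(ρ)) − x(ρ)·ρ. Suppose that for some ρ₀ ∈ U there exists a symmetric positive definite 2×2 matrix S such that S₁₁ ∂²ψ/∂x₁² + 2S₁₂ ∂²ψ/∂x₁∂x₂ + S₂₂ ∂²ψ/∂x₂² = 0 at the point x(ρ₀). Then v is twice differentiable at ρ₀ and det D²v(ρ₀) < 0. -/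
private lemma vec_decomp (u : ℝ × ℝ) : u = u.1 • ((1:ℝ),(0:ℝ)) + u.2 • ((0:ℝ),(1:ℝ)) := by
  simp [Prod.ext_iff]

private lemma clm_apply' (f : (ℝ × ℝ) →L[ℝ] ℝ) (u : ℝ × ℝ) :
    f u = u.1 * f (1,0) + u.2 * f (0,1) := by
  conv_lhs => rw [vec_decomp u]
  rw [map_add, map_smul, map_smul, smul_eq_mul, smul_eq_mul]

private lemma clm_ext' (f g : (ℝ × ℝ) →L[ℝ] ℝ) (h1 : f (1,0) = g (1,0))
    (h2 : f (0,1) = g (0,1)) : f = g := by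
  apply ContinuousLinearMap.ext
  intro u
  rw [clm_apply' f u, clm_apply' g u, h1, h2]

private lemma det_neg' {a b c p q r : ℝ} (ha : 0 < a) (hc : 0 < c) (hd : 0 < a*c - b*b)
    (hEL : a*p + 2*b*q + c*r = 0) (hne : p*r - q*q ≠ 0) : p*r - q*q < 0 := by
  rcases lt_or_gt_of_ne hne with h | h
  · exact h
  · exfalso
    have h2 : a*p + c*r = -(2*b*q) := by linarith
    have hsq : (a*p + c*r)^2 = (2*b*q)^2 := by rw [h2]; ring
    nlinarith [hsq, sq_nonneg (a*p - c*r), mul_pos (mul_pos ha hc) h,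
      mul_nonneg hd.le (sq_nonneg q)]



/-- The Hessian matrix `D²ψ(y)` of `ψ : ℝ² → ℝ`, with entries the iterated directional
derivatives along the coordinate directions. -/
noncomputable def hessian (ψ : ℝ × ℝ → ℝ) (y : ℝ × ℝ) : Matrix (Fin 2) (Fin 2) ℝ :=
  Matrix.of fun i j =>
    fderiv ℝ (fun z => fderiv ℝ ψ z (if j = 0 then ((1 : ℝ), (0 : ℝ)) else (0, 1))) y
      (if i = 0 then ((1 : ℝ), (0 : ℝ)) else (0, 1))

/-- with `ψ` C² on `W`, `x : U → W` C¹, `∇ψ(x(ρ)) = ρ` on `U`, and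
`v(ρ) = ψ(x(ρ)) − x(ρ)·ρ`: if at some `ρ₀ ∈ U` there is a symmetric positive definite `S`
with `S₁₁∂²₁₁ψ + 2S₁₂∂²₁₂ψ + S₂₂∂²₂₂ψ = 0` at `x(ρ₀)`, then `v` is twice differentiable at
`ρ₀` and `det D²v(ρ₀) < 0`. -/
theorem stmt_11 (U W : Set (ℝ × ℝ)) (hU : IsOpen U) (hW : IsOpen W)
    (ψ : ℝ × ℝ → ℝ) (hψ : ContDiffOn ℝ 2 ψ W)
    (x : ℝ × ℝ → ℝ × ℝ) (hxW : Set.MapsTo x U W) (hx : ContDiffOn ℝ 1 x U)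
    (hgrad : ∀ ρ ∈ U,
      fderiv ℝ ψ (x ρ) (1, 0) = ρ.1 ∧ fderiv ℝ ψ (x ρ) (0, 1) = ρ.2)
    (ρ₀ : ℝ × ℝ) (hρ₀ : ρ₀ ∈ U)
    (S : Matrix (Fin 2) (Fin 2) ℝ) (hSsymm : S.IsSymm) (hSpd : S.PosDef)
    (hEL : S 0 0 * hessian ψ (x ρ₀) 0 0 + 2 * S 0 1 * hessian ψ (x ρ₀) 0 1
        + S 1 1 * hessian ψ (x ρ₀) 1 1 = 0) :
    DifferentiableOn ℝ (fun ρ => ψ (x ρ) - ((x ρ).1 * ρ.1 + (x ρ).2 * ρ.2)) U ∧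
    DifferentiableAt ℝ
      (fun ρ => fderiv ℝ (fun ρ' => ψ (x ρ') - ((x ρ').1 * ρ'.1 + (x ρ').2 * ρ'.2)) ρ) ρ₀ ∧
    (hessian (fun ρ' => ψ (x ρ') - ((x ρ').1 * ρ'.1 + (x ρ').2 * ρ'.2)) ρ₀).det < 0 := by
  classical
  set v : ℝ × ℝ → ℝ := fun ρ => ψ (x ρ) - ((x ρ).1 * ρ.1 + (x ρ).2 * ρ.2) with hv_def
  have hxd : ∀ ρ ∈ U, DifferentiableAt ℝ x ρ := fun ρ hρ =>
    ((hx.differentiableOn (by norm_num)) ρ hρ).differentiableAt (hU.mem_nhds hρ)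
  have hψd : ∀ ρ ∈ U, DifferentiableAt ℝ ψ (x ρ) := fun ρ hρ =>
    ((hψ.differentiableOn (by norm_num)) (x ρ) (hxW hρ)).differentiableAt
      (hW.mem_nhds (hxW hρ))
  have happ : ∀ ρ ∈ U, ∀ u : ℝ × ℝ, fderiv ℝ ψ (x ρ) u = u.1 * ρ.1 + u.2 * ρ.2 := by
    intro ρ hρ u
    rw [clm_apply', (hgrad ρ hρ).1, (hgrad ρ hρ).2]
  set F : ℝ × ℝ → ((ℝ × ℝ) →L[ℝ] ℝ) := fun ρ =>
    -((x ρ).1 • ContinuousLinearMap.fst ℝ ℝ ℝ + (x ρ).2 • ContinuousLinearMap.snd ℝ ℝ ℝ)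
    with hF_def
  have hvF : ∀ ρ ∈ U, HasFDerivAt v (F ρ) ρ := by
    intro ρ hρ
    have hX := (hxd ρ hρ).hasFDerivAt
    have h1 : HasFDerivAt (fun ρ' => ψ (x ρ'))
        ((fderiv ℝ ψ (x ρ)).comp (fderiv ℝ x ρ)) ρ :=
      (hψd ρ hρ).hasFDerivAt.comp ρ hX
    have hx1 : HasFDerivAt (fun ρ' => (x ρ').1)
        ((ContinuousLinearMap.fst ℝ ℝ ℝ).comp (fderiv ℝ x ρ)) ρ :=
      (ContinuousLinearMap.fst ℝ ℝ ℝ).hasFDerivAt.comp ρ hX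
    have hx2 : HasFDerivAt (fun ρ' => (x ρ').2)
        ((ContinuousLinearMap.snd ℝ ℝ ℝ).comp (fderiv ℝ x ρ)) ρ :=
      (ContinuousLinearMap.snd ℝ ℝ ℝ).hasFDerivAt.comp ρ hX
    have hmul1 := hx1.mul (hasFDerivAt_fst (p := ρ))
    have hmul2 := hx2.mul (hasFDerivAt_snd (p := ρ))
    have htot := h1.sub (hmul1.add hmul2)
    have heq : ((fderiv ℝ ψ (x ρ)).comp (fderiv ℝ x ρ) -
        (((x ρ).1 • ContinuousLinearMap.fst ℝ ℝ ℝ +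
          ρ.1 • (ContinuousLinearMap.fst ℝ ℝ ℝ).comp (fderiv ℝ x ρ)) +
         ((x ρ).2 • ContinuousLinearMap.snd ℝ ℝ ℝ +
          ρ.2 • (ContinuousLinearMap.snd ℝ ℝ ℝ).comp (fderiv ℝ x ρ)))) = F ρ := by
      apply clm_ext'
      · simp [hF_def, happ ρ hρ]
        ring
      · simp [hF_def, happ ρ hρ]
        ring
    rw [← heq]
    exact htot
  have hdiffOn : DifferentiableOn ℝ v U := fun ρ hρ =>
    (hvF ρ hρ).differentiableAt.differentiableWithinAt
  have hfveq : ∀ ρ ∈ U, fderiv ℝ v ρ = F ρ := fun ρ hρ => (hvF ρ hρ).fderiv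
  have hFdiff : DifferentiableAt ℝ F ρ₀ := by
    have h1 : DifferentiableAt ℝ (fun ρ => (x ρ).1) ρ₀ := (hxd ρ₀ hρ₀).fst
    have h2 : DifferentiableAt ℝ (fun ρ => (x ρ).2) ρ₀ := (hxd ρ₀ hρ₀).snd
    exact ((h1.smul_const _).add (h2.smul_const _)).neg
  have hEvF : (fun ρ => fderiv ℝ v ρ) =ᶠ[nhds ρ₀] F := by
    filter_upwards [hU.mem_nhds hρ₀] with ρ hρ using hfveq ρ hρ
  have hDF : DifferentiableAt ℝ (fun ρ => fderiv ℝ v ρ) ρ₀ :=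
    hFdiff.congr_of_eventuallyEq hEvF
  refine ⟨hdiffOn, hDF, ?_⟩
  -- Part 3: the determinant
  set y₀ : ℝ × ℝ := x ρ₀ with hy0
  have hy₀W : y₀ ∈ W := hxW hρ₀
  have hψ2 : ContDiffAt ℝ 2 ψ y₀ := (hψ y₀ hy₀W).contDiffAt (hW.mem_nhds hy₀W)
  have hd1 : ContDiffAt ℝ 1 (fderiv ℝ ψ) y₀ := hψ2.fderiv_right (by norm_num)
  have hTd : DifferentiableAt ℝ (fderiv ℝ ψ) y₀ := hd1.differentiableAt (by norm_num)
  set T : (ℝ × ℝ) →L[ℝ] (ℝ × ℝ) →L[ℝ] ℝ := fderiv ℝ (fderiv ℝ ψ) y₀ with hT_def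
  -- hessian entries of ψ in terms of T
  have hAe : ∀ k j : Fin 2, hessian ψ y₀ k j
      = T (if k = 0 then ((1:ℝ),(0:ℝ)) else (0,1)) (if j = 0 then ((1:ℝ),(0:ℝ)) else (0,1)) := by
    intro k j
    set w : ℝ × ℝ := if j = 0 then ((1:ℝ),(0:ℝ)) else (0,1) with hw
    have hstep0 : HasFDerivAt (⇑(ContinuousLinearMap.apply ℝ ℝ w) ∘ fderiv ℝ ψ)
        ((ContinuousLinearMap.apply ℝ ℝ w).comp T) y₀ :=
      (ContinuousLinearMap.apply ℝ ℝ w).hasFDerivAt.comp y₀ hTd.hasFDerivAt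
    have hstep : HasFDerivAt (fun z => fderiv ℝ ψ z w)
        ((ContinuousLinearMap.apply ℝ ℝ w).comp T) y₀ := hstep0
    show fderiv ℝ (fun z => fderiv ℝ ψ z w) y₀ (if k = 0 then ((1:ℝ),(0:ℝ)) else (0,1)) = _
    rw [hstep.fderiv]
    simp
  have hsym : ∀ a b : ℝ × ℝ, T a b = T b a := by
    intro a b
    exact hψ2.isSymmSndFDerivAt (by norm_num) a b
  have hAsym : hessian ψ y₀ 1 0 = hessian ψ y₀ 0 1 := by
    rw [hAe 1 0, hAe 0 1]
    norm_num
    exact hsym _ _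
  -- chain rule: B * A = 1 entrywise
  have hchain : ∀ i j : Fin 2,
      (fderiv ℝ x ρ₀ (if i = 0 then ((1:ℝ),(0:ℝ)) else (0,1))).1 * hessian ψ y₀ 0 j
        + (fderiv ℝ x ρ₀ (if i = 0 then ((1:ℝ),(0:ℝ)) else (0,1))).2 * hessian ψ y₀ 1 j
        = if i = j then 1 else 0 := by
    intro i j
    set w : ℝ × ℝ := if j = 0 then ((1:ℝ),(0:ℝ)) else (0,1) with hw
    set ei : ℝ × ℝ := if i = 0 then ((1:ℝ),(0:ℝ)) else (0,1) with hei
    have hstep0 : HasFDerivAt (⇑(ContinuousLinearMap.apply ℝ ℝ w) ∘ fderiv ℝ ψ)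
        ((ContinuousLinearMap.apply ℝ ℝ w).comp T) y₀ :=
      (ContinuousLinearMap.apply ℝ ℝ w).hasFDerivAt.comp y₀ hTd.hasFDerivAt
    have hstep : HasFDerivAt (fun z => fderiv ℝ ψ z w)
        ((ContinuousLinearMap.apply ℝ ℝ w).comp T) y₀ := hstep0
    have hg0 := hstep.comp ρ₀ (hxd ρ₀ hρ₀).hasFDerivAt
    have hg : HasFDerivAt (fun ρ => fderiv ℝ ψ (x ρ) w)
        (((ContinuousLinearMap.apply ℝ ℝ w).comp T).comp (fderiv ℝ x ρ₀)) ρ₀ := hg0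
    have hEv : (fun ρ => fderiv ℝ ψ (x ρ) w) =ᶠ[nhds ρ₀]
        (fun ρ => if j = 0 then ρ.1 else ρ.2) := by
      filter_upwards [hU.mem_nhds hρ₀] with ρ hρ
      by_cases hj : j = 0 <;> simp [hw, hj, (hgrad ρ hρ).1, (hgrad ρ hρ).2]
    have hprd : HasFDerivAt (fun ρ : ℝ × ℝ => if j = 0 then ρ.1 else ρ.2)
        (if j = 0 then ContinuousLinearMap.fst ℝ ℝ ℝ else ContinuousLinearMap.snd ℝ ℝ ℝ)
        ρ₀ := by
      by_cases hj : j = 0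
      · simpa [hj] using hasFDerivAt_fst (p := ρ₀)
      · simpa [hj] using hasFDerivAt_snd (p := ρ₀)
    have hfeq : (((ContinuousLinearMap.apply ℝ ℝ w).comp T).comp (fderiv ℝ x ρ₀))
        = (if j = 0 then ContinuousLinearMap.fst ℝ ℝ ℝ else ContinuousLinearMap.snd ℝ ℝ ℝ) := by
      rw [← hg.fderiv, hEv.fderiv_eq, hprd.fderiv]
    have happei := congrArg (fun (L : (ℝ × ℝ) →L[ℝ] ℝ) => L ei) hfeq
    simp only [ContinuousLinearMap.comp_apply, ContinuousLinearMap.apply_apply] at happei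
    set u : ℝ × ℝ := fderiv ℝ x ρ₀ ei with hu
    have hTu : T u w = u.1 * T ((1:ℝ),(0:ℝ)) w + u.2 * T ((0:ℝ),(1:ℝ)) w := by
      conv_lhs => rw [vec_decomp u]
      rw [map_add, map_smul, map_smul]
      simp
    have hA0 : hessian ψ y₀ 0 j = T ((1:ℝ),(0:ℝ)) w := by
      rw [hAe 0 j, ← hw]; norm_num
    have hA1 : hessian ψ y₀ 1 j = T ((0:ℝ),(1:ℝ)) w := by
      rw [hAe 1 j, ← hw]; norm_num
    rw [hA0, hA1, ← hTu, happei]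
    have hi2 : i = 0 ∨ i = 1 := by omega
    have hj2 : j = 0 ∨ j = 1 := by omega
    rcases hi2 with hi | hi <;> rcases hj2 with hj | hj <;>
      simp [hi, hj, hei]
  -- hessian entries of v
  have hvhess : ∀ i j : Fin 2, hessian v ρ₀ i j
      = -(if j = 0 then (fderiv ℝ x ρ₀ (if i = 0 then ((1:ℝ),(0:ℝ)) else (0,1))).1
          else (fderiv ℝ x ρ₀ (if i = 0 then ((1:ℝ),(0:ℝ)) else (0,1))).2) := by
    intro i j
    have hEvj : (fun z => fderiv ℝ v z (if j = 0 then ((1:ℝ),(0:ℝ)) else (0,1)))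
        =ᶠ[nhds ρ₀] (fun z => -(if j = 0 then (x z).1 else (x z).2)) := by
      filter_upwards [hU.mem_nhds hρ₀] with z hz
      rw [hfveq z hz]
      by_cases hj : j = 0 <;> simp [hF_def, hj]
    have hder : HasFDerivAt (fun z => -(if j = 0 then (x z).1 else (x z).2))
        (-((if j = 0 then ContinuousLinearMap.fst ℝ ℝ ℝ
            else ContinuousLinearMap.snd ℝ ℝ ℝ).comp (fderiv ℝ x ρ₀))) ρ₀ := by
      by_cases hj : j = 0
      · simp only [hj, ↓reduceIte]; exact
          (((ContinuousLinearMap.fst ℝ ℝ ℝ).hasFDerivAt.comp ρ₀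
            (hxd ρ₀ hρ₀).hasFDerivAt)).neg
      · simp only [hj, ↓reduceIte]; exact
          (((ContinuousLinearMap.snd ℝ ℝ ℝ).hasFDerivAt.comp ρ₀
            (hxd ρ₀ hρ₀).hasFDerivAt)).neg
    show fderiv ℝ (fun z => fderiv ℝ v z (if j = 0 then ((1:ℝ),(0:ℝ)) else (0,1))) ρ₀
        (if i = 0 then ((1:ℝ),(0:ℝ)) else (0,1)) = _
    rw [hEvj.fderiv_eq, hder.fderiv]
    by_cases hj : j = 0 <;> simp [hj]
  -- abbreviations
  set p := hessian ψ y₀ 0 0 with hp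
  set q := hessian ψ y₀ 0 1 with hq
  set r := hessian ψ y₀ 1 1 with hr
  set u0 : ℝ × ℝ := fderiv ℝ x ρ₀ ((1:ℝ),(0:ℝ)) with hu0
  set u1 : ℝ × ℝ := fderiv ℝ x ρ₀ ((0:ℝ),(1:ℝ)) with hu1
  have E1 : u0.1 * p + u0.2 * q = 1 := by
    have := hchain 0 0; rw [hAsym] at this; simpa using this
  have E2 : u0.1 * q + u0.2 * r = 0 := by
    have := hchain 0 1; simpa using this
  have E3 : u1.1 * p + u1.2 * q = 0 := by
    have := hchain 1 0; rw [hAsym] at this; simpa using this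
  have E4 : u1.1 * q + u1.2 * r = 1 := by
    have := hchain 1 1; simpa using this
  have hkey : (u0.1 * u1.2 - u0.2 * u1.1) * (p * r - q * q) = 1 := by
    linear_combination (u0.1 * p + u0.2 * q) * E4 + E1 - (u0.1 * q + u0.2 * r) * E3
  have hAne : p * r - q * q ≠ 0 := by
    intro h0
    rw [h0, mul_zero] at hkey
    exact zero_ne_one hkey
  -- positivity facts for S
  have hS00 : 0 < S 0 0 := by
    have hne : (![1,0] : Fin 2 → ℝ) ≠ 0 := by
      intro h; simpa using congrFun h 0
    have := hSpd.dotProduct_mulVec_pos (x := ![1,0]) hne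
    simpa [Matrix.mulVec, dotProduct, Fin.sum_univ_two] using this
  have hS11 : 0 < S 1 1 := by
    have hne : (![0,1] : Fin 2 → ℝ) ≠ 0 := by
      intro h; simpa using congrFun h 1
    have := hSpd.dotProduct_mulVec_pos (x := ![0,1]) hne
    simpa [Matrix.mulVec, dotProduct, Fin.sum_univ_two] using this
  have hS10 : S 1 0 = S 0 1 := hSsymm.apply 0 1
  have hSdet : 0 < S 0 0 * S 1 1 - S 0 1 * S 0 1 := by
    have := hSpd.det_pos
    rw [Matrix.det_fin_two, hS10] at this
    linarith
  have hAdet : p * r - q * q < 0 :=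
    det_neg' (a := S 0 0) (b := S 0 1) (c := S 1 1) hS00 hS11 (by linarith)
      (by linear_combination hEL) hAne
  have hBdet : u0.1 * u1.2 - u0.2 * u1.1 < 0 := by
    by_contra hcon
    push_neg at hcon
    have hle := mul_nonpos_of_nonneg_of_nonpos hcon hAdet.le
    linarith [hkey]
  rw [Matrix.det_fin_two, hvhess 0 0, hvhess 0 1, hvhess 1 0, hvhess 1 1]
  norm_num
  rw [← hu0, ← hu1]
  linarith [hBdet]
end
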